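/- Let K ∈ ℝ^{k×d} be (κ,γ)-strongly stable for (A,B) with κ ≥ 1, let M = A + BK, let W ∈ ℝ^{d×d} be symmetric positive semidefinite with Tr(W) ≤ λ², and let X = Σ_{t=0}^∞ M^t W (Mᵀ)^t. Then the block matrix Σˢ = [[X, X Kᵀ],[K X, K X Kᵀ]] ∈ ℝ^{(d+k)×(d+k)} belongs to the SDP feasible set S with parameter ν = 2κ⁴λ²/γ; that is, Σˢ is symmetric positive semidefinite, Tr(Σˢ) ≤ ν, and (Σˢ)_{xx} = (A B) Σˢ (A B)ᵀ + W. -/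

import Mathlib

open Matrix

/-- Spectral (ℓ₂ operator) norm of a real matrix. -/
noncomputable def sNorm {m n : Type*} [Fintype m] [Fintype n] [DecidableEq n]
    (M : Matrix m n ℝ) : ℝ :=
  ‖LinearMap.toContinuousLinearMap (Matrix.toEuclideanLin M)‖

lemma ctr' {m n : Type*} (M : Matrix m n ℝ) : Mᴴ = Mᵀ := by
  ext i j; simp [conjTranspose_apply]

section OpNorm

open scoped Matrix.Norms.L2Operator

variable {m d : Type*} [Fintype m] [Fintype d] [DecidableEq d] [DecidableEq m]

lemma sNorm_eq (M : Matrix m d ℝ) : sNorm M = ‖M‖ := rfl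

lemma sNorm_nonneg (M : Matrix m d ℝ) : 0 ≤ sNorm M := by
  rw [sNorm_eq]; exact norm_nonneg _

lemma sNorm_mul_le {l : Type*} [Fintype l] [DecidableEq l]
    (A : Matrix m d ℝ) (B : Matrix d l ℝ) : sNorm (A * B) ≤ sNorm A * sNorm B := by
  simp only [sNorm_eq]; exact Matrix.l2_opNorm_mul A B

lemma dot_self_eq (v : d → ℝ) :
    v ⬝ᵥ v = ‖(EuclideanSpace.equiv d ℝ).symm v‖ ^ 2 := by
  rw [EuclideanSpace.norm_eq, Real.sq_sqrt (by positivity)]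
  simp [dotProduct, sq]

lemma mulVec_dot_le (A : Matrix m d ℝ) (x : d → ℝ) :
    (A *ᵥ x) ⬝ᵥ (A *ᵥ x) ≤ sNorm A ^ 2 * (x ⬝ᵥ x) := by
  rw [dot_self_eq, dot_self_eq, sNorm_eq]
  have h := A.l2_opNorm_mulVec ((EuclideanSpace.equiv d ℝ).symm x)
  calc ‖(EuclideanSpace.equiv m ℝ).symm (A *ᵥ x)‖ ^ 2
      ≤ (‖A‖ * ‖(EuclideanSpace.equiv d ℝ).symm x‖) ^ 2 := by
        apply pow_le_pow_left₀ (norm_nonneg _) h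
    _ = ‖A‖ ^ 2 * ‖(EuclideanSpace.equiv d ℝ).symm x‖ ^ 2 := by ring

end OpNorm

lemma sNorm_one_le {d : Type*} [Fintype d] [DecidableEq d] :
    sNorm (1 : Matrix d d ℝ) ≤ 1 := by
  apply ContinuousLinearMap.opNorm_le_bound _ zero_le_one
  intro x
  rw [one_mul]
  apply le_of_eq
  congr 1
  simp [Matrix.toEuclideanLin_apply, Matrix.one_mulVec]

lemma trace_nonneg_of_psd {d : Type*} [Fintype d] [DecidableEq d]
    {W : Matrix d d ℝ} (hW : W.PosSemidef) : 0 ≤ W.trace := by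
  rw [Matrix.trace]
  apply Finset.sum_nonneg
  intro i _
  have := hW.dotProduct_mulVec_nonneg (Pi.single i 1)
  simpa [dotProduct, mulVec, Pi.single_apply, Finset.sum_ite_eq', diag] using this

lemma trace_mul_psd_nonneg {d : Type*} [Fintype d] [DecidableEq d]
    {P W : Matrix d d ℝ} (hP : P.PosSemidef) (hW : W.PosSemidef) :
    0 ≤ (P * W).trace := by
  open scoped MatrixOrder Matrix.Norms.L2Operator in
  obtain ⟨C, hC⟩ := CStarAlgebra.nonneg_iff_eq_star_mul_self.mp hW.nonneg
  rw [star_eq_conjTranspose] at hC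
  have key : (P * W).trace = (C * P * Cᵀ).trace := by
    rw [hC, ctr', ← Matrix.mul_assoc, Matrix.trace_mul_comm, ← Matrix.mul_assoc]
  rw [key]
  have : (C * P * Cᵀ).PosSemidef := by
    have := hP.mul_mul_conjTranspose_same C
    rwa [ctr'] at this
  exact trace_nonneg_of_psd this

lemma key_trace_le {m d : Type*} [Fintype m] [Fintype d] [DecidableEq d] [DecidableEq m]
    (A : Matrix m d ℝ) {W : Matrix d d ℝ} (hW : W.PosSemidef) :
    (A * W * Aᵀ).trace ≤ sNorm A ^ 2 * W.trace := by
  have hpsd : ((sNorm A ^ 2) • (1 : Matrix d d ℝ) - Aᵀ * A).PosSemidef := by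
    refine Matrix.PosSemidef.of_dotProduct_mulVec_nonneg ?_ ?_
    · show _ = _
      rw [ctr', transpose_sub, transpose_smul, transpose_one, transpose_mul, transpose_transpose]
    · intro x
      have h1 := mulVec_dot_le A x
      have key : (star x) ⬝ᵥ (((sNorm A ^ 2) • (1 : Matrix d d ℝ) - Aᵀ * A) *ᵥ x)
          = sNorm A ^ 2 * (x ⬝ᵥ x) - (A *ᵥ x) ⬝ᵥ (A *ᵥ x) := by
        rw [Matrix.sub_mulVec, dotProduct_sub, Matrix.smul_mulVec, Matrix.one_mulVec,
          dotProduct_smul, ← Matrix.mulVec_mulVec, Matrix.dotProduct_mulVec (star x),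
          star_trivial, Matrix.vecMul_transpose, smul_eq_mul]
      rw [key]; linarith
  have h2 : 0 ≤ ((sNorm A ^ 2 • (1 : Matrix d d ℝ) - Aᵀ * A) * W).trace :=
    trace_mul_psd_nonneg hpsd hW
  rw [Matrix.sub_mul, Matrix.trace_sub, Matrix.smul_mul, Matrix.one_mul, Matrix.trace_smul] at h2
  have h3 : (Aᵀ * A * W).trace = (A * W * Aᵀ).trace := by
    rw [Matrix.mul_assoc, Matrix.trace_mul_comm, Matrix.mul_assoc]
  simp only [smul_eq_mul] at h2
  linarith [h3 ▸ h2]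

lemma trace_fromBlocks' {d k : Type*} [Fintype d] [Fintype k]
    (A₁₁ : Matrix d d ℝ) (A₁₂ : Matrix d k ℝ) (A₂₁ : Matrix k d ℝ) (A₂₂ : Matrix k k ℝ) :
    (fromBlocks A₁₁ A₁₂ A₂₁ A₂₂).trace = A₁₁.trace + A₂₂.trace := by
  simp [Matrix.trace, Matrix.diag, Fintype.sum_sum_type]

/-- Frobenius norm of a real matrix. -/
noncomputable def fNorm {m n : Type*} [Fintype m] [Fintype n] (M : Matrix m n ℝ) : ℝ :=
  Real.sqrt (Matrix.trace (Mᵀ * M))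

/-- `K` is `(κ,γ)`-strongly stable for the pair `(A,B)`. -/
def StronglyStable {d k : ℕ} (A : Matrix (Fin d) (Fin d) ℝ) (B : Matrix (Fin d) (Fin k) ℝ)
    (K : Matrix (Fin k) (Fin d) ℝ) (κ γ : ℝ) : Prop :=
  0 < κ ∧ 0 < γ ∧ γ ≤ 1 ∧ sNorm K ≤ κ ∧
    ∃ H L : Matrix (Fin d) (Fin d) ℝ, IsUnit H ∧ A + B * K = H * L * H⁻¹ ∧
      sNorm L ≤ 1 - γ ∧ sNorm H * sNorm H⁻¹ ≤ κ

/-- The feasible set of the SDP relaxation of LQ control. -/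
def Feasible {d k : ℕ} (A : Matrix (Fin d) (Fin d) ℝ) (B : Matrix (Fin d) (Fin k) ℝ)
    (W : Matrix (Fin d) (Fin d) ℝ) (ν : ℝ)
    (Sg : Matrix (Fin d ⊕ Fin k) (Fin d ⊕ Fin k) ℝ) : Prop :=
  Sg.PosSemidef ∧ Sg.trace ≤ ν ∧
    Sg.toBlocks₁₁ = fromCols A B * Sg * (fromCols A B)ᵀ + W

/-- The controller `K = Σ_{xu}ᵀ Σ_{xx}⁻¹` extracted from an SDP point. -/
noncomputable def extractK {d k : ℕ} (Sg : Matrix (Fin d ⊕ Fin k) (Fin d ⊕ Fin k) ℝ) :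
    Matrix (Fin k) (Fin d) ℝ :=
  (Sg.toBlocks₁₂)ᵀ * (Sg.toBlocks₁₁)⁻¹

/-- The exploration covariance `V = Σ_{uu} - K Σ_{xx} Kᵀ` extracted from an SDP point. -/
noncomputable def extractV {d k : ℕ} (Sg : Matrix (Fin d ⊕ Fin k) (Fin d ⊕ Fin k) ℝ) :
    Matrix (Fin k) (Fin k) ℝ :=
  Sg.toBlocks₂₂ - extractK Sg * Sg.toBlocks₁₁ * (extractK Sg)ᵀ

/-- the steady-state covariance block matrix induced by a (κ,γ)-strongly
stable controller is feasible for the SDP with parameter `ν = 2κ⁴λ²/γ`. -/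
theorem stmt7 {d k : ℕ} (A : Matrix (Fin d) (Fin d) ℝ) (B : Matrix (Fin d) (Fin k) ℝ)
    (K : Matrix (Fin k) (Fin d) ℝ) (κ γ lam : ℝ) (hκ : 1 ≤ κ)
    (h : StronglyStable A B K κ γ)
    (M : Matrix (Fin d) (Fin d) ℝ) (hM : M = A + B * K)
    (W : Matrix (Fin d) (Fin d) ℝ) (hW : W.PosSemidef) (htrW : W.trace ≤ lam ^ 2)
    (X : Matrix (Fin d) (Fin d) ℝ)
    (hX : HasSum (fun t : ℕ => M ^ t * W * (Mᵀ) ^ t) X) :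
    Feasible A B W (2 * κ ^ 4 * lam ^ 2 / γ)
      (fromBlocks X (X * Kᵀ) (K * X) (K * X * Kᵀ)) := by
  obtain ⟨hκ0, hγ0, hγ1, hK, H, L, hH, hHL, hL, hHn⟩ := h
  rw [← hM] at hHL
  have hWsym : Wᵀ = W := by have : Wᴴ = W := hW.1; rwa [ctr'] at this
  -- basic facts about terms
  have hterm : ∀ t : ℕ, (M ^ t * W * (Mᵀ) ^ t).PosSemidef := by
    intro t
    have := hW.mul_mul_conjTranspose_same (M ^ t)
    rwa [ctr', transpose_pow] at this
  -- X is symmetric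
  have hXt : Xᵀ = X := by
    have h1 := hX.matrix_transpose
    have h2 : (fun t : ℕ => (M ^ t * W * (Mᵀ) ^ t)ᵀ) = fun t : ℕ => M ^ t * W * (Mᵀ) ^ t := by
      funext t
      simp [transpose_mul, transpose_pow, hWsym, Matrix.mul_assoc]
    rw [h2] at h1
    exact h1.unique hX
  -- X is PSD
  have hXpsd : X.PosSemidef := by
    refine Matrix.PosSemidef.of_dotProduct_mulVec_nonneg (by rwa [Matrix.IsHermitian, ctr']) fun x => ?_
    have hφ : Continuous fun S : Matrix (Fin d) (Fin d) ℝ => star x ⬝ᵥ (S *ᵥ x) :=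
      continuous_const.dotProduct (continuous_id.matrix_mulVec continuous_const)
    have hmap := hX.map
      (AddMonoidHom.mk' (fun S : Matrix (Fin d) (Fin d) ℝ => star x ⬝ᵥ (S *ᵥ x))
        (fun S T => by simp [Matrix.add_mulVec, dotProduct_add])) hφ
    exact hmap.nonneg fun t => by simpa using (hterm t).dotProduct_mulVec_nonneg x
  -- fixed point equation
  have hfix : X = M * X * Mᵀ + W := by
    have hφ : Continuous fun S : Matrix (Fin d) (Fin d) ℝ => M * S * Mᵀ :=
      (continuous_const.matrix_mul continuous_id).matrix_mul continuous_const
    have hmap := hX.map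
      (AddMonoidHom.mk' (fun S : Matrix (Fin d) (Fin d) ℝ => M * S * Mᵀ)
        (fun S T => by simp [Matrix.mul_add, Matrix.add_mul])) hφ
    have h2 : ((fun S : Matrix (Fin d) (Fin d) ℝ => M * S * Mᵀ) ∘
        fun t : ℕ => M ^ t * W * (Mᵀ) ^ t)
        = fun t : ℕ => M ^ (t + 1) * W * (Mᵀ) ^ (t + 1) := by
      funext t
      simp only [Function.comp_apply]
      rw [pow_succ' M, pow_succ (Mᵀ)]
      simp only [Matrix.mul_assoc]
    have hmap' : HasSum (fun t : ℕ => M ^ (t + 1) * W * (Mᵀ) ^ (t + 1)) (M * X * Mᵀ) := by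
      rw [← h2]; exact hmap
    have h3 := (hasSum_nat_add_iff (f := fun t : ℕ => M ^ t * W * (Mᵀ) ^ t) 1).mp hmap'
    simp only [Finset.range_one, Finset.sum_singleton, pow_zero, Matrix.one_mul,
      Matrix.mul_one] at h3
    exact hX.unique h3
  -- powers of M
  have hdet : IsUnit H.det := (Matrix.isUnit_iff_isUnit_det H).mp hH
  have hHH : H * H⁻¹ = 1 := Matrix.mul_nonsing_inv H hdet
  have hHH' : H⁻¹ * H = 1 := Matrix.nonsing_inv_mul H hdet
  have hγnn : (0:ℝ) ≤ 1 - γ := by linarith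
  have hMpow : ∀ t : ℕ, M ^ t = H * L ^ t * H⁻¹ := by
    intro t
    induction t with
    | zero => rw [pow_zero, pow_zero, Matrix.mul_one, hHH]
    | succ n ih =>
      rw [pow_succ, ih, hHL, pow_succ]
      simp only [Matrix.mul_assoc]
      rw [← Matrix.mul_assoc H⁻¹ H, hHH', Matrix.one_mul]
  have hLn : ∀ t : ℕ, sNorm (L ^ t) ≤ (1 - γ) ^ t := by
    intro t
    induction t with
    | zero => simpa [pow_zero] using sNorm_one_le
    | succ n ih =>
      rw [pow_succ, pow_succ]
      exact le_trans (sNorm_mul_le _ _)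
        (mul_le_mul ih hL (sNorm_nonneg _) (pow_nonneg hγnn n))
  have hMt : ∀ t : ℕ, sNorm (M ^ t) ≤ κ * (1 - γ) ^ t := by
    intro t
    rw [hMpow t]
    calc sNorm (H * L ^ t * H⁻¹) ≤ sNorm (H * L ^ t) * sNorm H⁻¹ := sNorm_mul_le _ _
      _ ≤ (sNorm H * sNorm (L ^ t)) * sNorm H⁻¹ :=
          mul_le_mul_of_nonneg_right (sNorm_mul_le _ _) (sNorm_nonneg _)
      _ = (sNorm H * sNorm H⁻¹) * sNorm (L ^ t) := by ring
      _ ≤ κ * (1 - γ) ^ t :=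
          mul_le_mul hHn (hLn t) (sNorm_nonneg _) (le_of_lt hκ0)
  -- trace estimates
  have htr : HasSum (fun t : ℕ => (M ^ t * W * (Mᵀ) ^ t).trace) X.trace := by
    have hc : Continuous fun S : Matrix (Fin d) (Fin d) ℝ => S.trace :=
      continuous_id.matrix_trace
    exact hX.map (AddMonoidHom.mk' (fun S : Matrix (Fin d) (Fin d) ℝ => S.trace)
      (fun S T => Matrix.trace_add S T)) hc
  have htrW0 : 0 ≤ W.trace := trace_nonneg_of_psd hW
  have hr0 : (0:ℝ) ≤ (1 - γ) ^ 2 := sq_nonneg _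
  have hr1 : (1 - γ) ^ 2 < 1 := by nlinarith
  have hgeo := (hasSum_geometric_of_lt_one hr0 hr1).mul_left (κ ^ 2 * lam ^ 2)
  have hXtr : X.trace ≤ κ ^ 2 * lam ^ 2 * (1 - (1 - γ) ^ 2)⁻¹ := by
    refine hasSum_le (fun t => ?_) htr hgeo
    have h1 : (M ^ t * W * (Mᵀ) ^ t).trace ≤ sNorm (M ^ t) ^ 2 * W.trace := by
      have := key_trace_le (M ^ t) hW
      rwa [transpose_pow] at this
    have h2 : sNorm (M ^ t) ^ 2 * W.trace ≤ (κ * (1 - γ) ^ t) ^ 2 * lam ^ 2 :=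
      mul_le_mul (pow_le_pow_left₀ (sNorm_nonneg _) (hMt t) 2) htrW htrW0 (by positivity)
    calc (M ^ t * W * (Mᵀ) ^ t).trace ≤ (κ * (1 - γ) ^ t) ^ 2 * lam ^ 2 := le_trans h1 h2
      _ = κ ^ 2 * lam ^ 2 * ((1 - γ) ^ 2) ^ t := by
          rw [mul_pow, ← pow_mul, ← pow_mul, mul_comm 2 t]; ring
  have hc1 : γ ≤ 1 - (1 - γ) ^ 2 := by nlinarith
  have hXtr2 : X.trace ≤ κ ^ 2 * lam ^ 2 / γ := by
    refine le_trans hXtr ?_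
    rw [div_eq_mul_inv]
    exact mul_le_mul_of_nonneg_left (inv_anti₀ hγ0 hc1) (by positivity)
  -- assembly
  set P := fromRows (1 : Matrix (Fin d) (Fin d) ℝ) K with hP
  have hPt : Pᵀ = fromCols (1 : Matrix (Fin d) (Fin d) ℝ) Kᵀ := by
    rw [hP, transpose_fromRows, transpose_one]
  have hSig : fromBlocks X (X * Kᵀ) (K * X) (K * X * Kᵀ) = P * X * Pᵀ := by
    rw [hPt, hP, fromRows_mul, fromRows_mul_fromCols, Matrix.one_mul, Matrix.mul_one,
      Matrix.mul_one]
  refine ⟨?_, ?_, ?_⟩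
  · rw [hSig]
    have := hXpsd.mul_mul_conjTranspose_same P
    rwa [ctr'] at this
  · rw [trace_fromBlocks']
    have hKX : (K * X * Kᵀ).trace ≤ sNorm K ^ 2 * X.trace := key_trace_le K hXpsd
    have hX0 : 0 ≤ X.trace := trace_nonneg_of_psd hXpsd
    have hK2 : sNorm K ^ 2 ≤ κ ^ 2 := pow_le_pow_left₀ (sNorm_nonneg _) hK 2
    have hb : (K * X * Kᵀ).trace ≤ κ ^ 2 * X.trace :=
      le_trans hKX (mul_le_mul_of_nonneg_right hK2 hX0)
    have ha : X.trace * γ ≤ κ ^ 2 * lam ^ 2 := (le_div_iff₀ hγ0).mp hXtr2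
    rw [le_div_iff₀ hγ0]
    have hκ2 : 1 ≤ κ ^ 2 := by nlinarith
    have h1 := mul_le_mul_of_nonneg_right hb hγ0.le
    have h2 := mul_le_mul_of_nonneg_left (mul_le_mul_of_nonneg_right ha hγ0.le) (sq_nonneg κ)
    have h2' := mul_le_mul_of_nonneg_left ha (sq_nonneg κ)
    have h4 : κ ^ 2 * lam ^ 2 ≤ κ ^ 4 * lam ^ 2 := by nlinarith [mul_nonneg (mul_nonneg (sq_nonneg κ) (sq_nonneg lam)) (sub_nonneg.mpr hκ2)]
    have h5 : κ ^ 2 * (κ ^ 2 * lam ^ 2) = κ ^ 4 * lam ^ 2 := by ring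
    linarith [h1, h2', ha, h4, h5]
  · rw [Matrix.toBlocks_fromBlocks₁₁, hSig]
    have hABP : fromCols A B * P = M := by
      rw [hP, fromCols_mul_fromRows, Matrix.mul_one, ← hM]
    have hassoc : fromCols A B * (P * X * Pᵀ) * (fromCols A B)ᵀ
        = (fromCols A B * P) * (X * (Pᵀ * (fromCols A B)ᵀ)) := by
      simp only [Matrix.mul_assoc]
    rw [hassoc, hABP, ← transpose_mul, hABP, ← Matrix.mul_assoc]
    exact hfix
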